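/- For n ≥ 2, the map that sends a pair (D, r), where D is a Dyck path of semilength n−1 with last descent length k and r is an integer with 0 ≤ r ≤ k, to the Dyck path of semilength n obtained from D by inserting an ascent-descent pair at the point of the last descent of D that has r descents after it, is a bijection from the set of such pairs onto the set of all Dyck paths of semilength n; moreover, the resulting path has last descent length r + 1 (so a path with last descent length k has exactly k + 1 successors, with last descent lengths 1, 2, …, k+1). -/

import Mathlib

/-- A Dyck path of semilength `n`: a sequence of `2n` steps (`true` = ascent `+1`,
`false` = descent `-1`) with all partial sums nonnegative and total sum `0`. -/
def IsDyckPath (n : ℕ) (s : Fin (2*n) → Bool) : Prop :=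
  (∀ j : Fin (2*n),
      (Finset.univ.filter (fun i => i ≤ j ∧ s i = false)).card
        ≤ (Finset.univ.filter (fun i => i ≤ j ∧ s i = true)).card) ∧
  (Finset.univ.filter (fun i => s i = true)).card = n

/-- The last descent length: the number of trailing descents of the path. -/
def lastDescent (n : ℕ) (s : Fin (2*n) → Bool) : ℕ :=
  (Finset.univ.filter (fun i : Fin (2*n) => ∀ j, i ≤ j → s j = false)).card

/-- Insertion of an ascent-descent pair into a path of `2m` steps at the point with
`r` (trailing) descents after it, i.e. at position `2m - r`. -/
def insertPeak (m : ℕ) (D : Fin (2*m) → Bool) (r : ℕ) : Fin (2*(m+1)) → Bool :=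
  fun p =>
    if h1 : (p : ℕ) < 2*m - r then D ⟨(p : ℕ), by omega⟩
    else if h2 : (p : ℕ) = 2*m - r then true
    else if h3 : (p : ℕ) = 2*m - r + 1 then false
    else D ⟨(p : ℕ) - 2, by have h4 := p.isLt; omega⟩


open Finset

/-- count of steps equal to `b` among the first `t` positions -/
def cnt (N : ℕ) (s : Fin N → Bool) (b : Bool) (t : ℕ) : ℕ :=
  (Finset.univ.filter fun i : Fin N => (i : ℕ) < t ∧ s i = b).card

lemma card_filter_lt_val (N a : ℕ) :
    (Finset.univ.filter fun i : Fin N => (i : ℕ) < a).card = min a N := by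
  rw [← Finset.card_range (min a N)]
  exact Finset.card_bij (fun i _ => (i : ℕ))
    (by
      intro i hi
      simp only [Finset.mem_filter, Finset.mem_univ, true_and] at hi
      simp [Nat.lt_min, hi, i.isLt])
    (fun i _ j _ h => Fin.ext h)
    (by
      intro x hx
      simp only [Finset.mem_range, Nat.lt_min] at hx
      exact ⟨⟨x, hx.2⟩, by simp [hx.1], rfl⟩)

lemma card_filter_le_val (N a : ℕ) :
    (Finset.univ.filter fun i : Fin N => a ≤ (i : ℕ)).card = N - a := by
  have h := Finset.card_filter_add_card_filter_not
    (s := (Finset.univ : Finset (Fin N))) (p := fun i : Fin N => (i : ℕ) < a)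
  simp only [not_lt] at h
  have h2 := card_filter_lt_val N a
  have h3 : (Finset.univ : Finset (Fin N)).card = N := by simp
  omega

lemma cnt_zero (N : ℕ) (s : Fin N → Bool) (b : Bool) : cnt N s b 0 = 0 := by
  simp [cnt]

lemma cnt_succ (N : ℕ) (s : Fin N → Bool) (b : Bool) (t : ℕ) (ht : t < N) :
    cnt N s b (t + 1) = cnt N s b t + if s ⟨t, ht⟩ = b then 1 else 0 := by
  unfold cnt
  by_cases hs : s ⟨t, ht⟩ = b
  · rw [if_pos hs]
    have : (Finset.univ.filter fun i : Fin N => (i : ℕ) < t + 1 ∧ s i = b)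
        = insert ⟨t, ht⟩ (Finset.univ.filter fun i : Fin N => (i : ℕ) < t ∧ s i = b) := by
      ext i
      simp only [mem_filter, mem_univ, true_and, Finset.mem_insert]
      constructor
      · rintro ⟨h1, h2⟩
        rcases Nat.lt_succ_iff_lt_or_eq.mp h1 with h | h
        · exact Or.inr ⟨h, h2⟩
        · exact Or.inl (Fin.ext h)
      · rintro (rfl | ⟨h1, h2⟩)
        · exact ⟨Nat.lt_succ_self _, hs⟩

        · exact ⟨Nat.lt_succ_of_lt h1, h2⟩
    rw [this, Finset.card_insert_of_notMem (by simp)]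
  · rw [if_neg hs]
    have : (Finset.univ.filter fun i : Fin N => (i : ℕ) < t + 1 ∧ s i = b)
        = Finset.univ.filter fun i : Fin N => (i : ℕ) < t ∧ s i = b := by
      ext i
      simp only [mem_filter, mem_univ, true_and]
      constructor
      · rintro ⟨h1, h2⟩
        rcases Nat.lt_succ_iff_lt_or_eq.mp h1 with h | h
        · exact ⟨h, h2⟩
        · exact absurd h2 (by rw [show i = ⟨t, ht⟩ from Fin.ext h]; exact hs)
      · rintro ⟨h1, h2⟩; exact ⟨Nat.lt_succ_of_lt h1, h2⟩
    rw [this]; omega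

lemma cnt_of_ge (N : ℕ) (s : Fin N → Bool) (b : Bool) (t : ℕ) (ht : N ≤ t) :
    cnt N s b t = cnt N s b N := by
  unfold cnt
  congr 1
  apply Finset.filter_congr
  intro i _
  simp [i.isLt, lt_of_lt_of_le i.isLt ht]

lemma cnt_add_cnt (N : ℕ) (s : Fin N → Bool) (t : ℕ) :
    cnt N s false t + cnt N s true t = min t N := by
  unfold cnt
  have h1 : ∀ b, (Finset.univ.filter fun i : Fin N => (i : ℕ) < t ∧ s i = b)
      = (Finset.univ.filter fun i : Fin N => (i : ℕ) < t).filter (fun i => s i = b) := by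
    intro b; rw [Finset.filter_filter]
  rw [h1, h1, ← card_filter_lt_val N t]
  have := Finset.card_filter_add_card_filter_not
    (s := Finset.univ.filter fun i : Fin N => (i : ℕ) < t) (p := fun i : Fin N => s i = false)
  simp only [Bool.not_eq_false] at this
  omega

lemma cnt_mono (N : ℕ) (s : Fin N → Bool) (b : Bool) {a t : ℕ} (h : a ≤ t) :
    cnt N s b a ≤ cnt N s b t := by
  apply Finset.card_le_card
  intro i hi
  simp only [Finset.mem_filter, Finset.mem_univ, true_and] at hi ⊢
  exact ⟨lt_of_lt_of_le hi.1 h, hi.2⟩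

lemma cnt_const (N : ℕ) (s : Fin N → Bool) (b : Bool) {a t : ℕ} (h : a ≤ t)
    (hno : ∀ u (hu : u < N), a ≤ u → s ⟨u, hu⟩ ≠ b) :
    cnt N s b t = cnt N s b a := by
  induction t, h using Nat.le_induction with
  | base => rfl
  | succ t ht ih =>
    by_cases htN : t < N
    · rw [cnt_succ N s b t htN, if_neg (hno t htN ht), ih, Nat.add_zero]
    · rw [cnt_of_ge N s b (t+1) (by omega), ← cnt_of_ge N s b t (by omega), ih]
-- layer 2 appended to base
lemma isDyck_iff (n : ℕ) (s : Fin (2*n) → Bool) :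
    IsDyckPath n s ↔
      ((∀ t, t ≤ 2*n → cnt (2*n) s false t ≤ cnt (2*n) s true t) ∧
        cnt (2*n) s true (2*n) = n) := by
  have key : ∀ (j : Fin (2*n)) (b : Bool),
      (Finset.univ.filter fun i => i ≤ j ∧ s i = b).card = cnt (2*n) s b ((j : ℕ) + 1) := by
    intro j b
    unfold cnt
    congr 1
    apply Finset.filter_congr
    intro i _
    rw [Fin.le_def, Nat.lt_succ_iff]
  have key2 : (Finset.univ.filter fun i => s i = true).card = cnt (2*n) s true (2*n) := by
    unfold cnt
    congr 1
    apply Finset.filter_congr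
    intro i _
    simp [i.isLt]
  constructor
  · rintro ⟨h1, h2⟩
    refine ⟨?_, by rw [← key2]; exact h2⟩
    intro t ht
    rcases Nat.eq_zero_or_pos t with rfl | hpos
    · simp [cnt_zero]
    · have hj : t - 1 < 2*n := by omega
      have := h1 ⟨t - 1, hj⟩
      rw [key, key] at this
      simpa [Nat.sub_add_cancel hpos] using this
  · rintro ⟨h1, h2⟩
    refine ⟨?_, by rw [key2]; exact h2⟩
    intro j
    rw [key, key]
    exact h1 _ (by have := j.isLt; omega)

lemma lastDescent_eq_of (n t : ℕ) (s : Fin (2*n) → Bool) (ht : t ≤ 2*n)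
    (h1 : ∀ j : Fin (2*n), 2*n - t ≤ (j : ℕ) → s j = false)
    (h2 : ∀ _ : t < 2*n, s ⟨2*n - t - 1, by omega⟩ = true) :
    lastDescent n s = t := by
  unfold lastDescent
  have : (Finset.univ.filter fun i : Fin (2*n) => ∀ j, i ≤ j → s j = false)
      = Finset.univ.filter fun i : Fin (2*n) => 2*n - t ≤ (i : ℕ) := by
    apply Finset.filter_congr
    intro i _
    constructor
    · intro hP
      by_contra hlt
      push_neg at hlt
      have htn : t < 2*n := by have := i.isLt; omega
      have := hP ⟨2*n - t - 1, by omega⟩ (by simp [Fin.le_def]; omega)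
      rw [h2 htn] at this
      exact Bool.noConfusion this
    · intro hle j hij
      exact h1 j (le_trans hle hij)
  rw [this, card_filter_le_val]
  omega

lemma lastDescent_spec (n : ℕ) (s : Fin (2*n) → Bool) :
    lastDescent n s ≤ 2*n ∧
    (∀ j : Fin (2*n), 2*n - lastDescent n s ≤ (j : ℕ) → s j = false) ∧
    (∀ _ : lastDescent n s < 2*n,
      s ⟨2*n - lastDescent n s - 1, by omega⟩ = true) := by
  set k := lastDescent n s with hk
  set S := Finset.univ.filter fun i : Fin (2*n) => ∀ j, i ≤ j → s j = false with hS
  have hcard : S.card = k := rfl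
  have hk2n : k ≤ 2*n := by
    rw [← hcard]
    calc S.card ≤ (Finset.univ : Finset (Fin (2*n))).card := Finset.card_le_card (Finset.filter_subset _ _)
    _ = 2*n := by simp
  have hmem : ∀ i : Fin (2*n), i ∈ S ↔ 2*n - k ≤ (i : ℕ) := by
    intro i
    constructor
    · intro hi
      simp only [hS, Finset.mem_filter, Finset.mem_univ, true_and] at hi
      have hsub : Finset.univ.filter (fun j : Fin (2*n) => (i : ℕ) ≤ (j : ℕ)) ⊆ S := by
        intro j hj
        simp only [Finset.mem_filter, Finset.mem_univ, true_and] at hj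
        simp only [hS, Finset.mem_filter, Finset.mem_univ, true_and]
        intro j' hjj'
        exact hi j' (le_trans (by exact hj) hjj')
      have := Finset.card_le_card hsub
      rw [card_filter_le_val, hcard] at this
      have := i.isLt
      omega
    · intro hle
      by_contra hni
      have hsub : S ⊆ Finset.univ.filter (fun j : Fin (2*n) => (i : ℕ) < (j : ℕ)) := by
        intro j hj
        simp only [Finset.mem_filter, Finset.mem_univ, true_and]
        by_contra hji
        push_neg at hji
        apply hni
        simp only [hS, Finset.mem_filter, Finset.mem_univ, true_and] at hj ⊢
        intro j' hij'
        exact hj j' (le_trans (by exact hji) hij')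
      have hc := Finset.card_le_card hsub
      rw [hcard] at hc
      have hc2 : (Finset.univ.filter fun j : Fin (2*n) => (i : ℕ) < (j : ℕ)).card = 2*n - ((i:ℕ)+1) := by
        have : (Finset.univ.filter fun j : Fin (2*n) => (i : ℕ) < (j : ℕ))
            = Finset.univ.filter fun j : Fin (2*n) => (i : ℕ) + 1 ≤ (j : ℕ) := by
          apply Finset.filter_congr; intro j _; omega
        rw [this, card_filter_le_val]
      have := i.isLt
      omega
  refine ⟨hk2n, ?_, ?_⟩
  · intro j hj
    have hjS : j ∈ S := (hmem j).mpr hj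
    simp only [hS, Finset.mem_filter, Finset.mem_univ, true_and] at hjS
    exact hjS j le_rfl
  · intro hklt
    set p : Fin (2*n) := ⟨2*n - k - 1, by omega⟩ with hp
    have hpS : p ∉ S := by
      rw [hmem]
      simp only [hp]
      omega
    simp only [hS, Finset.mem_filter, Finset.mem_univ, true_and, not_forall] at hpS
    obtain ⟨j, hpj, hjne⟩ := hpS
    have hjtrue : s j = true := by
      cases hsj : s j
      · exact absurd hsj hjne
      · rfl
    have hjp : j = p := by
      by_contra hne
      have : (p : ℕ) < (j : ℕ) := lt_of_le_of_ne hpj (fun h => hne (Fin.ext h.symm))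
      have hge : 2*n - k ≤ (j : ℕ) := by simp only [hp] at this; omega
      have hjS : j ∈ S := (hmem j).mpr hge
      simp only [hS, Finset.mem_filter, Finset.mem_univ, true_and] at hjS
      have := hjS j le_rfl
      rw [hjtrue] at this
      exact Bool.noConfusion this
    rw [← hjp]
    exact hjtrue

section Ins
variable (m : ℕ) (D : Fin (2*m) → Bool) (r : ℕ)

lemma insertPeak_lt {p : Fin (2*(m+1))} (h : (p : ℕ) < 2*m - r) :
    insertPeak m D r p = D ⟨(p : ℕ), by omega⟩ := by
  unfold insertPeak
  rw [dif_pos h]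

lemma insertPeak_eq1 {p : Fin (2*(m+1))} (h : (p : ℕ) = 2*m - r) :
    insertPeak m D r p = true := by
  unfold insertPeak
  rw [dif_neg (by omega), dif_pos h]

lemma insertPeak_eq2 {p : Fin (2*(m+1))} (h : (p : ℕ) = 2*m - r + 1) :
    insertPeak m D r p = false := by
  unfold insertPeak
  rw [dif_neg (by omega), dif_neg (by omega), dif_pos h]

lemma insertPeak_ge {p : Fin (2*(m+1))} (h : 2*m - r + 2 ≤ (p : ℕ)) :
    insertPeak m D r p = D ⟨(p : ℕ) - 2, by have := p.isLt; omega⟩ := by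
  unfold insertPeak
  rw [dif_neg (by omega), dif_neg (by omega), dif_neg (by omega)]

variable (hr : r ≤ 2*m)

lemma ins_cnt_low (b : Bool) (t : ℕ) (h : t ≤ 2*m - r) :
    cnt (2*(m+1)) (insertPeak m D r) b t = cnt (2*m) D b t := by
  induction t with
  | zero => rw [cnt_zero, cnt_zero]
  | succ t ih =>
    have ht : t < 2*m - r := by omega
    have ht1 : t < 2*(m+1) := by omega
    have ht2 : t < 2*m := by omega
    rw [cnt_succ _ _ b t ht1, cnt_succ _ _ b t ht2, ih (by omega),
      insertPeak_lt m D r (p := ⟨t, ht1⟩) ht]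

lemma ins_cnt_mid (b : Bool) :
    cnt (2*(m+1)) (insertPeak m D r) b (2*m - r + 1)
      = cnt (2*m) D b (2*m - r) + (if b = true then 1 else 0) := by
  have ht1 : 2*m - r < 2*(m+1) := by omega
  rw [cnt_succ _ _ b (2*m - r) ht1, ins_cnt_low m D r b _ le_rfl,
    insertPeak_eq1 m D r (p := ⟨2*m - r, ht1⟩) rfl]
  cases b <;> simp

lemma ins_cnt_high (b : Bool) (t : ℕ) (h1 : 2*m - r + 2 ≤ t) (h2 : t ≤ 2*(m+1)) :
    cnt (2*(m+1)) (insertPeak m D r) b t = cnt (2*m) D b (t - 2) + 1 := by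
  induction t, h1 using Nat.le_induction with
  | base =>
    have ht1 : 2*m - r + 1 < 2*(m+1) := by omega
    rw [cnt_succ _ _ b (2*m - r + 1) ht1, ins_cnt_mid m D r b,
      insertPeak_eq2 m D r (p := ⟨2*m - r + 1, ht1⟩) rfl]
    have : 2*m - r + 2 - 2 = 2*m - r := by omega
    rw [this]
    cases b <;> simp
  | succ t ht ih =>
    have ht1 : t < 2*(m+1) := by omega
    have ht2 : t - 2 < 2*m := by omega
    have e1 : t + 1 - 2 = (t - 2) + 1 := by omega
    rw [cnt_succ _ _ b t ht1, ih (by omega), e1, cnt_succ _ _ b (t-2) ht2,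
      insertPeak_ge m D r (p := ⟨t, ht1⟩) ht]
    split_ifs <;> omega
end Ins

lemma forward_part (m : ℕ) (D : Fin (2*m) → Bool) (hD : IsDyckPath m D)
    (r : ℕ) (hr : r ≤ lastDescent m D) :
    IsDyckPath (m+1) (insertPeak m D r) ∧
      lastDescent (m+1) (insertPeak m D r) = r + 1 := by
  obtain ⟨hk2m, hktail, hkhead⟩ := lastDescent_spec m D
  set k := lastDescent m D with hk
  have hr2m : r ≤ 2*m := le_trans hr hk2m
  rw [isDyck_iff] at hD
  obtain ⟨hD1, hD2⟩ := hD
  constructor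
  · rw [isDyck_iff]
    constructor
    · intro t ht
      rcases Nat.lt_or_ge t (2*m - r + 1) with h | h
      · rcases Nat.lt_or_ge t (2*m - r) with h' | h'
        · rw [ins_cnt_low m D r false t (by omega), ins_cnt_low m D r true t (by omega)]
          exact hD1 t (by omega)
        · have : t = 2*m - r := by omega
          subst this
          rw [ins_cnt_low m D r false _ le_rfl, ins_cnt_low m D r true _ le_rfl]
          exact hD1 _ (by omega)
      · rcases Nat.lt_or_ge t (2*m - r + 2) with h' | h'
        · have : t = 2*m - r + 1 := by omega
          subst this
          rw [ins_cnt_mid m D r false, ins_cnt_mid m D r true]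
          simp only [if_pos rfl, if_neg (by simp : ¬ (false = true))]
          have := hD1 (2*m - r) (by omega)
          omega
        · rw [ins_cnt_high m D r false t h' ht, ins_cnt_high m D r true t h' ht]
          have := hD1 (t - 2) (by omega)
          omega
    · rw [ins_cnt_high m D r true (2*(m+1)) (by omega) le_rfl]
      have : 2*(m+1) - 2 = 2*m := by omega
      rw [this, hD2]
  · apply lastDescent_eq_of (m+1) (r+1) _ (by omega)
    · intro j hj
      have hj' : 2*m - r + 1 ≤ (j : ℕ) := by omega
      rcases Nat.lt_or_ge (j : ℕ) (2*m - r + 2) with h | h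
      · exact insertPeak_eq2 m D r (by omega)
      · rw [insertPeak_ge m D r h]
        refine hktail _ ?_
        simp only [Fin.val_mk]
        omega
    · intro _
      apply insertPeak_eq1 m D r
      simp only [Fin.val_mk]
      omega

lemma reverse_part (m : ℕ) (s : Fin (2*(m+1)) → Bool) (hs : IsDyckPath (m+1) s) :
    ∃ (D : Fin (2*m) → Bool) (r : ℕ), IsDyckPath m D ∧ r ≤ lastDescent m D ∧
      insertPeak m D r = s := by
  obtain ⟨hk2, htail, hhead⟩ := lastDescent_spec (m+1) s
  set k := lastDescent (m+1) s with hkdef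
  rw [isDyck_iff] at hs
  obtain ⟨hs1, hs2⟩ := hs
  -- the last step is a descent
  have hlastfalse : s ⟨2*m+1, by omega⟩ = false := by
    by_contra htrue
    rw [Bool.not_eq_false] at htrue
    have e1 := cnt_succ (2*(m+1)) s true (2*m+1) (by omega)
    rw [if_pos htrue] at e1
    have e2 : 2*m+1+1 = 2*(m+1) := by omega
    rw [e2, hs2] at e1
    have e3 := cnt_add_cnt (2*(m+1)) s (2*m+1)
    have e4 := hs1 (2*m+1) (by omega)
    omega
  -- k ≥ 1
  have hk1 : 1 ≤ k := by
    by_contra hk0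
    have hk0' : k = 0 := by omega
    have := hhead (by omega)
    have he : (⟨2*(m+1) - k - 1, by omega⟩ : Fin (2*(m+1))) = ⟨2*m+1, by omega⟩ := by
      apply Fin.ext; simp [hk0']; omega
    rw [he, hlastfalse] at this
    exact Bool.noConfusion this
  -- k ≤ m + 1
  have hkm : k ≤ m + 1 := by
    have hc : cnt (2*(m+1)) s true (2*(m+1)) = cnt (2*(m+1)) s true (2*(m+1) - k) := by
      apply cnt_const _ _ _ (by omega)
      intro u hu hau
      rw [htail ⟨u, hu⟩ hau]
      simp
    have hc2 := cnt_add_cnt (2*(m+1)) s (2*(m+1) - k)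
    omega
  set r := k - 1 with hrdef
  have hr2m : r ≤ 2*m := by omega
  set q := 2*m - r with hqdef
  have hq1 : 2*(m+1) - k = q + 1 := by omega
  have strue_q : s ⟨q, by omega⟩ = true := by
    have := hhead (by omega)
    have he : (⟨2*(m+1) - k - 1, by omega⟩ : Fin (2*(m+1))) = ⟨q, by omega⟩ := by
      apply Fin.ext; simp; omega
    rwa [he] at this
  have stail : ∀ j : Fin (2*(m+1)), q + 1 ≤ (j : ℕ) → s j = false := by
    intro j hj
    exact htail j (by omega)
  refine ⟨fun p => if (p : ℕ) < q then s ⟨(p : ℕ), by have := p.isLt; omega⟩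
      else s ⟨(p : ℕ) + 2, by have := p.isLt; omega⟩, r, ?_⟩
  set D : Fin (2*m) → Bool := fun p => if (p : ℕ) < q then s ⟨(p : ℕ), by have := p.isLt; omega⟩
      else s ⟨(p : ℕ) + 2, by have := p.isLt; omega⟩ with hDdef
  have hins : insertPeak m D r = s := by
    funext p
    rcases Nat.lt_or_ge (p : ℕ) q with h | h
    · rw [insertPeak_lt m D r h, hDdef]
      simp only [Fin.val_mk]
      rw [if_pos h]
    · rcases Nat.lt_or_ge (p : ℕ) (q + 1) with h' | h'
      · have hpq : (p : ℕ) = q := by omega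
        rw [insertPeak_eq1 m D r (by omega)]
        have : p = ⟨q, by omega⟩ := Fin.ext hpq
        rw [this, strue_q]
      · rcases Nat.lt_or_ge (p : ℕ) (q + 2) with h'' | h''
        · rw [insertPeak_eq2 m D r (by omega), stail p (by omega)]
        · rw [insertPeak_ge m D r (by omega), hDdef]
          simp only [Fin.val_mk]
          rw [if_neg (by omega)]
          congr 1
          apply Fin.ext
          simp
          omega
  have hlow : ∀ (b : Bool) (t : ℕ), t ≤ q →
      cnt (2*(m+1)) s b t = cnt (2*m) D b t := by
    intro b t h
    rw [← hins]
    exact ins_cnt_low m D r b t (by omega)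
  have hhigh : ∀ (b : Bool) (t : ℕ), q + 2 ≤ t → t ≤ 2*(m+1) →
      cnt (2*(m+1)) s b t = cnt (2*m) D b (t - 2) + 1 := by
    intro b t h1 h2
    rw [← hins]
    exact ins_cnt_high m D r b t (by omega) h2
  have hDdyck : IsDyckPath m D := by
    rw [isDyck_iff]
    constructor
    · intro t ht
      rcases Nat.lt_or_ge t (q+1) with h | h
      · rw [← hlow false t (by omega), ← hlow true t (by omega)]
        exact hs1 t (by omega)
      · have e1 := hhigh false (t+2) (by omega) (by omega)
        have e2 := hhigh true (t+2) (by omega) (by omega)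
        have e3 : t + 2 - 2 = t := by omega
        rw [e3] at e1 e2
        have := hs1 (t+2) (by omega)
        omega
    · have e := hhigh true (2*(m+1)) (by omega) le_rfl
      have e3 : 2*(m+1) - 2 = 2*m := by omega
      rw [e3] at e
      omega
  refine ⟨hDdyck, ?_, hins⟩
  -- r ≤ lastDescent m D
  have hsub : (Finset.univ.filter fun i : Fin (2*m) => q ≤ (i : ℕ))
      ⊆ Finset.univ.filter fun i : Fin (2*m) => ∀ j, i ≤ j → D j = false := by
    intro i hi
    simp only [Finset.mem_filter, Finset.mem_univ, true_and] at hi ⊢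
    intro j hij
    have hjq : q ≤ (j : ℕ) := le_trans hi hij
    rw [hDdef]
    simp only []
    rw [if_neg (by omega)]
    apply stail
    simp only [Fin.val_mk]
    omega
  have := Finset.card_le_card hsub
  rw [card_filter_le_val] at this
  unfold lastDescent
  omega

/-- For `n = m + 1 ≥ 2`: sending a pair `(D, r)` — where `D` is a Dyck path of
semilength `n - 1` with last descent length `k` and `0 ≤ r ≤ k` — to the Dyck path
of semilength `n` obtained by inserting an ascent-descent pair at the point of the
last descent of `D` having `r` descents after it, is a bijection onto the set of
all Dyck paths of semilength `n`, and the resulting path has last descent length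
`r + 1` (so a path with last descent length `k` has exactly `k + 1` successors,
with last descent lengths `1, 2, …, k + 1`). -/
theorem insertPeak_bijective (m : ℕ) (hm : 1 ≤ m) :
    (∀ (D : Fin (2*m) → Bool), IsDyckPath m D → ∀ r : ℕ, r ≤ lastDescent m D →
        IsDyckPath (m+1) (insertPeak m D r) ∧
        lastDescent (m+1) (insertPeak m D r) = r + 1) ∧
    (∃ g : {Dr : (Fin (2*m) → Bool) × ℕ //
            IsDyckPath m Dr.1 ∧ Dr.2 ≤ lastDescent m Dr.1} →
          {s : Fin (2*(m+1)) → Bool // IsDyckPath (m+1) s},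
      (∀ Dr, (g Dr).1 = insertPeak m Dr.1.1 Dr.1.2) ∧ Function.Bijective g) := by
  refine ⟨fun D hD r hr => forward_part m D hD r hr, ?_⟩
  refine ⟨fun Dr => ⟨insertPeak m Dr.1.1 Dr.1.2,
    (forward_part m Dr.1.1 Dr.2.1 Dr.1.2 Dr.2.2).1⟩, fun Dr => rfl, ?_, ?_⟩
  · -- injective
    rintro ⟨⟨D, r⟩, hD, hr⟩ ⟨⟨D', r'⟩, hD', hr'⟩ heq
    have hval : insertPeak m D r = insertPeak m D' r' := congrArg Subtype.val heq
    have hld : r + 1 = r' + 1 := by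
      rw [← (forward_part m D hD r hr).2, ← (forward_part m D' hD' r' hr').2, hval]
    have hrr : r = r' := by omega
    subst hrr
    have hr2m : r ≤ 2*m := le_trans hr (lastDescent_spec m D).1
    have hDD : D = D' := by
      funext p
      rcases Nat.lt_or_ge (p : ℕ) (2*m - r) with h | h
      · have h1 : ((⟨(p : ℕ), by have := p.isLt; omega⟩ : Fin (2*(m+1))) : ℕ) < 2*m - r := h
        have e1 := insertPeak_lt m D r h1
        have e2 := insertPeak_lt m D' r h1
        rw [hval] at e1
        rw [e1] at e2
        have hp : (⟨((⟨(p : ℕ), by have := p.isLt; omega⟩ : Fin (2*(m+1))) : ℕ), by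
            have := p.isLt; omega⟩ : Fin (2*m)) = p := by apply Fin.ext; rfl
        rw [hp] at e2
        exact e2
      · have h1 : 2*m - r + 2 ≤ ((⟨(p : ℕ) + 2, by have := p.isLt; omega⟩ : Fin (2*(m+1))) : ℕ) := by
          simp only [Fin.val_mk]; omega
        have e1 := insertPeak_ge m D r h1
        have e2 := insertPeak_ge m D' r h1
        rw [hval] at e1
        rw [e1] at e2
        have hp : (⟨((⟨(p : ℕ) + 2, by have := p.isLt; omega⟩ : Fin (2*(m+1))) : ℕ) - 2, by
            have := p.isLt; omega⟩ : Fin (2*m)) = p := by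
          apply Fin.ext; simp
        rw [hp] at e2
        exact e2
    apply Subtype.ext
    simp [hDD]
  · -- surjective
    rintro ⟨s, hs⟩
    obtain ⟨D, r, hD, hr, hins⟩ := reverse_part m s hs
    exact ⟨⟨(D, r), hD, hr⟩, Subtype.ext hins⟩
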